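/- Let F be a field and let b ∈ F[X] satisfy b(1) = 0, with n = deg b and coefficients b_1, …, b_n (so b = Σ_{i=1}^{n} b_i·X^i + b_0 with Σ_{i=0}^{n} b_i = 0). Then, in 2×2 matrices over F[X]: [[1, b], [0, 1]] = ∏_{i=1}^{n} (I₂ − b_i·E₁₂ + b_i·E₁₂·X^i), where E₁₂ is the 2×2 matrix unit with 1 in position (1,2) and 0 elsewhere (regarded over F[X]), and the product may be taken in any order since all factors commute. -/

import Mathlib

open Polynomial

lemma aux_mul {R : Type*} [CommRing R] (a c : R) :
    (!![1, a; 0, 1] : Matrix (Fin 2) (Fin 2) R) * !![1, c; 0, 1] = !![1, a + c; 0, 1] := by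
  ext i j; fin_cases i <;> fin_cases j <;>
    simp [Matrix.mul_apply, Fin.sum_univ_two] <;> ring

lemma aux_factor {R : Type*} [CommRing R] (c p : R) :
    (1 : Matrix (Fin 2) (Fin 2) R) - Matrix.single 0 1 c
      + Matrix.single 0 1 c * Matrix.scalar (Fin 2) p
    = !![1, c * (p - 1); 0, 1] := by
  ext i j; fin_cases i <;> fin_cases j <;>
    simp [Matrix.single, Matrix.mul_apply, Fin.sum_univ_two, Matrix.one_apply] <;> ring

lemma aux_prod {R : Type*} [CommRing R] (g : ℕ → R) (n : ℕ) :
    ((List.range n).map (fun i => (!![1, g i; 0, 1] : Matrix (Fin 2) (Fin 2) R))).prod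
      = !![1, ∑ i ∈ Finset.range n, g i; 0, 1] := by
  induction n with
  | zero => simp; ext i j; fin_cases i <;> fin_cases j <;> simp [Matrix.one_apply]
  | succ n ih =>
      rw [List.range_succ, List.map_append, List.prod_append, ih, Finset.sum_range_succ]
      simp [aux_mul, add_comm]

theorem unipotent_factorization {F : Type*} [Field F] (b : F[X]) (hb : b.eval 1 = 0)
    (n : ℕ) (hn : b.natDegree = n) :
    (!![1, b; 0, 1] : Matrix (Fin 2) (Fin 2) F[X]) =
      ((List.range n).map (fun i =>
        (1 : Matrix (Fin 2) (Fin 2) F[X])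
          - Matrix.single 0 1 (Polynomial.C (b.coeff (i + 1)))
          + Matrix.single 0 1 (Polynomial.C (b.coeff (i + 1)))
              * Matrix.scalar (Fin 2) ((X : F[X]) ^ (i + 1)))).prod := by
  have hsum : b = ∑ i ∈ Finset.range n, C (b.coeff (i + 1)) * ((X : F[X]) ^ (i + 1) - 1) := by
    have h1 : b = ∑ i ∈ Finset.range (n + 1), C (b.coeff i) * X ^ i := by
      exact (b.as_sum_range' (n + 1) (by omega)).trans
        (Finset.sum_congr rfl fun i _ => (C_mul_X_pow_eq_monomial).symm)
    have h2 : (∑ i ∈ Finset.range (n + 1), b.coeff i) = 0 := by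
      have := congrArg (Polynomial.eval 1) h1
      rw [hb] at this
      simpa [Polynomial.eval_finset_sum] using this.symm
    rw [Finset.sum_range_succ'] at h1 h2
    have h0 : C (b.coeff 0) = - ∑ i ∈ Finset.range n, C (b.coeff (i + 1)) := by
      have : b.coeff 0 = - ∑ i ∈ Finset.range n, b.coeff (i + 1) := by linear_combination h2
      rw [this]; push_cast [map_neg, map_sum]; ring
    calc b = ∑ i ∈ Finset.range n, C (b.coeff (i + 1)) * X ^ (i + 1) + C (b.coeff 0) := by
              simpa using h1
      _ = _ := by rw [h0, ← sub_eq_add_neg, ← Finset.sum_sub_distrib]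
                  exact Finset.sum_congr rfl fun i _ => by ring
  simp only [aux_factor]
  rw [aux_prod]
  conv_lhs => rw [hsum]
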